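/- Let p : X → Y × ℝ be a continuous map and let X ∪_p Y denote the teardrop, i.e. the set X ⊔ Y with the minimal topology such that X ⊆ X ∪_p Y is an open embedding and the collapse map c : X ∪_p Y → Y × (-∞, +∞], defined by c(x) = p(x) for x ∈ X and c(y) = (y, +∞) for y ∈ Y, is continuous. Then a function f : Z → X ∪_p Y from a topological space Z is continuous if and only if (i) the restriction f : f⁻¹(X) → X is continuous, and (ii) the composition c ∘ f : Z → Y × (-∞, +∞] is continuous. -/

import Mathlib

open Topology Set

/-- The collapse map of the teardrop `X ∪_p Y`, landing in `Y × (-∞, +∞]`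
(modelled as `Y × EReal`; the value `⊥` is never attained). -/
noncomputable def teardropCollapse {X Y : Type*} (p : X → Y × ℝ) : X ⊕ Y → Y × EReal
  | Sum.inl x => ((p x).1, ((p x).2 : EReal))
  | Sum.inr y => (y, ⊤)

/-- The teardrop topology on `X ⊔ Y`: the minimal topology such that
`X ⊆ X ∪_p Y` is an open embedding and the collapse map is continuous. -/
def teardropTop {X Y : Type*} [TopologicalSpace X] [TopologicalSpace Y]
    (p : X → Y × ℝ) : TopologicalSpace (X ⊕ Y) :=
  TopologicalSpace.generateFrom
    ({S | ∃ U : Set X, IsOpen U ∧ S = Sum.inl '' U} ∪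
     {S | ∃ V : Set (Y × EReal), IsOpen V ∧ S = teardropCollapse p ⁻¹' V})

/-- Continuity criterion for maps into a teardrop (Lemma 3.4):
`f : Z → X ∪_p Y` is continuous iff its restriction `f⁻¹(X) → X` is continuous
and the composition `c ∘ f : Z → Y × (-∞, +∞]` is continuous. -/
theorem continuity_criterion_for_teardrop
    {X Y Z : Type*} [TopologicalSpace X] [TopologicalSpace Y] [TopologicalSpace Z]
    (p : X → Y × ℝ) (hp : Continuous p) (f : Z → X ⊕ Y) :
    @Continuous Z (X ⊕ Y) _ (teardropTop p) f ↔
      (Continuous fun z : {z : Z // (f z).isLeft} => (f z.1).getLeft z.2) ∧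
        Continuous (teardropCollapse p ∘ f) := by
  constructor
  · intro hf
    constructor
    · rw [continuous_def]
      intro U hU
      have hgen : @IsOpen _ (teardropTop p) (Sum.inl '' U) :=
        TopologicalSpace.isOpen_generateFrom_of_mem (Or.inl ⟨U, hU, rfl⟩)
      have hpre : IsOpen (f ⁻¹' (Sum.inl '' U)) :=
        @Continuous.isOpen_preimage Z (X ⊕ Y) _ (teardropTop p) f hf _ hgen
      have heq : (fun z : {z : Z // (f z).isLeft} => (f z.1).getLeft z.2) ⁻¹' U =
          Subtype.val ⁻¹' (f ⁻¹' (Sum.inl '' U)) := by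
        ext ⟨z, hz⟩
        simp only [mem_preimage, mem_image]
        constructor
        · intro h
          exact ⟨(f z).getLeft hz, h, Sum.inl_getLeft _ hz⟩
        · rintro ⟨x, hx, hfz⟩
          have : (f z).getLeft hz = x :=
            Sum.inl_injective ((Sum.inl_getLeft _ hz).trans hfz.symm)
          rwa [this]
      rw [heq]
      exact hpre.preimage continuous_subtype_val
    · rw [continuous_def]
      intro V hV
      have hgen : @IsOpen _ (teardropTop p) (teardropCollapse p ⁻¹' V) :=
        TopologicalSpace.isOpen_generateFrom_of_mem (Or.inr ⟨V, hV, rfl⟩)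
      exact @Continuous.isOpen_preimage Z (X ⊕ Y) _ (teardropTop p) f hf _ hgen
  · rintro ⟨h1, h2⟩
    rw [teardropTop]
    rw [continuous_generateFrom_iff]
    rintro t (⟨U, hU, rfl⟩ | ⟨V, hV, rfl⟩)
    · -- f ⁻¹' (inl '' U)
      have hS : IsOpen {z : Z | (f z).isLeft} := by
        have : {z : Z | (f z).isLeft} =
            (teardropCollapse p ∘ f) ⁻¹' (univ ×ˢ {(⊤ : EReal)}ᶜ) := by
          ext z
          cases hfz : f z with
          | inl x =>
            simp only [mem_setOf_eq, hfz, Sum.isLeft_inl, mem_preimage, Function.comp_apply,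
              teardropCollapse, mem_prod, mem_univ, mem_compl_iff, mem_singleton_iff, true_and]
            exact iff_of_true trivial (EReal.coe_ne_top _)
          | inr y =>
            simp [hfz, teardropCollapse]
        rw [this]
        exact h2.isOpen_preimage _ (isOpen_univ.prod isClosed_singleton.isOpen_compl)
      have heq : f ⁻¹' (Sum.inl '' U) =
          Subtype.val '' ((fun z : {z : Z // (f z).isLeft} => (f z.1).getLeft z.2) ⁻¹' U) := by
        ext z
        simp only [mem_preimage, mem_image, mem_image, Subtype.exists]
        constructor
        · rintro ⟨x, hx, hfz⟩
          have hz : (f z).isLeft := by rw [← hfz]; rfl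
          refine ⟨z, hz, ?_, rfl⟩
          have : (f z).getLeft hz = x :=
            Sum.inl_injective ((Sum.inl_getLeft _ hz).trans hfz.symm)
          simpa [this] using hx
        · rintro ⟨z', hz', hmem, rfl⟩
          exact ⟨(f z').getLeft hz', hmem, Sum.inl_getLeft _ hz'⟩
      rw [heq]
      exact hS.isOpenMap_subtype_val _ (h1.isOpen_preimage _ hU)
    · exact h2.isOpen_preimage _ hV
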